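/- Let α ∈ (0,1) and let X be an ℕ-valued random variable satisfying the recursive distributional equation. Then p = P(X = 0) ≥ 1 − α. -/

import Mathlib

open scoped ENNReal

/-- The Poisson(α) probability mass function on ℕ. -/
noncomputable def poissonPMF (α : ℝ) (k : ℕ) : ℝ≥0∞ :=
  ENNReal.ofReal (Real.exp (-α) * α ^ k / (Nat.factorial k))

/-- The Geometric(1/2) pmf: P(N = k) = (1/2)^(k+1) for k ≥ 0. -/
noncomputable def geomHalf (k : ℕ) : ℝ≥0∞ := (1 / 2) ^ (k + 1)

/-- The law of (X - 1)⁺ when X has law μ on ℕ. -/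
noncomputable def shiftLaw (μ : ℕ → ℝ≥0∞) (k : ℕ) : ℝ≥0∞ :=
  if k = 0 then μ 0 + μ 1 else μ (k + 1)

/-- Convolution of two (sub-)pmfs on ℕ: the law of an independent sum. -/
noncomputable def convAdd (f g : ℕ → ℝ≥0∞) (k : ℕ) : ℝ≥0∞ :=
  ∑ j ∈ Finset.range (k + 1), f j * g (k - j)

/-- n-fold convolution of a pmf on ℕ: the law of a sum of n i.i.d. copies. -/
noncomputable def iterConv (f : ℕ → ℝ≥0∞) : ℕ → ℕ → ℝ≥0∞
  | 0 => fun k => if k = 0 then 1 else 0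
  | n + 1 => convAdd (iterConv f n) f

/-- μ is the law of an ℕ-valued random variable X satisfying the RDE
    X =_d P + ∑_{i=1}^N (X_i - 1)⁺, with P ~ Poisson(α), N ~ Geom(1/2),
    X_i i.i.d. with law μ, all independent. -/
def SatisfiesRDE (α : ℝ) (μ : ℕ → ℝ≥0∞) : Prop :=
  (∑' k, μ k) = 1 ∧
  ∀ k, μ k = ∑' n, geomHalf n * convAdd (poissonPMF α) (iterConv (shiftLaw μ) n) k

/-- The probability generating function G(s) = E[s^X]. -/
noncomputable def pgf (μ : ℕ → ℝ≥0∞) (s : ℝ) : ℝ := ∑' k, (μ k).toReal * s ^ k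

/-- The mean E[X] = ∑ k · P(X = k), valued in [0,∞]. -/
noncomputable def meanENN (μ : ℕ → ℝ≥0∞) : ℝ≥0∞ := ∑' k : ℕ, (k : ℝ≥0∞) * μ k

noncomputable def EG (f : ℕ → ℝ≥0∞) (x : ℝ≥0∞) : ℝ≥0∞ := ∑' k, f k * x ^ k

def sigEquiv : (Σ k : ℕ, Fin (k + 1)) ≃ ℕ × ℕ where
  toFun q := (q.2.1, q.1 - q.2.1)
  invFun p := ⟨p.1 + p.2, ⟨p.1, by omega⟩⟩
  left_inv q := by
    obtain ⟨k, ⟨j, hj⟩⟩ := q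
    dsimp only
    exact Sigma.ext (show j + (k - j) = k by omega)
      ((Fin.heq_ext_iff (show j + (k - j) + 1 = k + 1 by omega)).2 rfl)
  right_inv p := by cases p; simp

theorem EG_conv (f g : ℕ → ℝ≥0∞) (x : ℝ≥0∞) :
    EG (convAdd f g) x = EG f x * EG g x := by
  unfold EG convAdd
  rw [← ENNReal.tsum_mul_right]
  simp_rw [← ENNReal.tsum_mul_left]
  rw [← ENNReal.tsum_prod]
  rw [← sigEquiv.tsum_eq (fun p : ℕ × ℕ => f p.1 * x ^ p.1 * (g p.2 * x ^ p.2))]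
  rw [ENNReal.tsum_sigma']
  congr 1
  ext k
  rw [tsum_fintype]
  rw [Finset.sum_mul]
  rw [← Fin.sum_univ_eq_sum_range (fun j => f j * g (k - j) * x ^ k)]
  congr 1
  ext j
  have hj : (j : ℕ) ≤ k := by omega
  have : x ^ (j : ℕ) * x ^ (k - (j : ℕ)) = x ^ k := by
    rw [← pow_add]; congr 1; omega
  simp only [sigEquiv, Equiv.coe_fn_mk]
  rw [← this]; ring

theorem EG_iter (f : ℕ → ℝ≥0∞) (x : ℝ≥0∞) (n : ℕ) :
    EG (iterConv f n) x = (EG f x) ^ n := by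
  induction n with
  | zero =>
    simp only [iterConv, EG, pow_zero]
    rw [tsum_eq_single 0]
    · simp
    · intro k hk; simp [hk]
  | succ n ih =>
    rw [iterConv, EG_conv, ih, pow_succ]

theorem EG_poisson (α : ℝ) (hα : 0 ≤ α) (s : ℝ) (hs : 0 ≤ s) :
    EG (poissonPMF α) (ENNReal.ofReal s) = ENNReal.ofReal (Real.exp (α * s - α)) := by
  unfold EG poissonPMF
  have h1 : ∀ k : ℕ, ENNReal.ofReal (Real.exp (-α) * α ^ k / (Nat.factorial k)) *
      (ENNReal.ofReal s) ^ k
      = ENNReal.ofReal (Real.exp (-α)) * ENNReal.ofReal ((α * s) ^ k / (Nat.factorial k)) := by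
    intro k
    rw [← ENNReal.ofReal_pow hs, ← ENNReal.ofReal_mul (by positivity),
      ← ENNReal.ofReal_mul (by positivity)]
    congr 1
    rw [mul_pow]
    ring
  simp_rw [h1]
  rw [ENNReal.tsum_mul_left, ← ENNReal.ofReal_tsum_of_nonneg
    (fun k => by positivity) (Real.summable_pow_div_factorial (α * s)),
    ← ENNReal.ofReal_mul (Real.exp_nonneg _)]
  congr 1
  have : ∑' k : ℕ, (α * s) ^ k / (Nat.factorial k) = Real.exp (α * s) := by
    rw [Real.exp_eq_exp_ℝ, NormedSpace.exp_eq_tsum_div]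
  rw [this, ← Real.exp_add]
  ring_nf

theorem tsum_geomHalf_mul (y : ℝ≥0∞) :
    ∑' n, geomHalf n * y ^ n = 2⁻¹ * (1 - y * 2⁻¹)⁻¹ := by
  unfold geomHalf
  have h1 : ∀ n : ℕ, ((1 : ℝ≥0∞) / 2) ^ (n + 1) * y ^ n = 2⁻¹ * (y * 2⁻¹) ^ n := by
    intro n
    rw [pow_succ, mul_pow, one_div]
    ring
  simp_rw [h1]
  rw [ENNReal.tsum_mul_left, ENNReal.tsum_geometric]

theorem tsum_shiftLaw (μ : ℕ → ℝ≥0∞) : ∑' k, shiftLaw μ k = ∑' k, μ k := by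
  rw [tsum_eq_zero_add' ENNReal.summable, tsum_eq_zero_add' ENNReal.summable (f := μ),
    tsum_eq_zero_add' ENNReal.summable (f := fun n => μ (n + 1))]
  have h0 : shiftLaw μ 0 = μ 0 + μ 1 := by simp [shiftLaw]
  have h1 : ∀ n : ℕ, shiftLaw μ (n + 1) = μ (n + 1 + 1) := fun n => by
    simp [shiftLaw]
  rw [h0]
  simp_rw [h1]
  ring

theorem EG_shift_id (μ : ℕ → ℝ≥0∞) (x : ℝ≥0∞) :
    x * EG (shiftLaw μ) x + μ 0 = EG μ x + μ 0 * x := by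
  unfold EG
  rw [← ENNReal.tsum_mul_left]
  rw [tsum_eq_zero_add' ENNReal.summable, tsum_eq_zero_add' ENNReal.summable
    (f := fun k => μ k * x ^ k)]
  have h1 : ∀ n : ℕ, x * (shiftLaw μ (n + 1) * x ^ (n + 1)) = μ (n + 2) * x ^ (n + 2) := by
    intro n
    have : shiftLaw μ (n + 1) = μ (n + 2) := by simp [shiftLaw]
    rw [this]; ring
  simp_rw [h1]
  rw [tsum_eq_zero_add' ENNReal.summable (f := fun n => μ (n + 1) * x ^ (n + 1))]
  have h2 : ∀ b : ℕ, μ (b + 1 + 1) * x ^ (b + 1 + 1) = μ (b + 2) * x ^ (b + 2) := fun b => rfl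
  simp only [shiftLaw, if_pos rfl, pow_zero, mul_one, pow_one, if_true]
  simp_rw [h2]
  ring

theorem EG_rde (α : ℝ) (μ : ℕ → ℝ≥0∞) (hμ : SatisfiesRDE α μ) (x : ℝ≥0∞) :
    EG μ x = EG (poissonPMF α) x * ∑' n, geomHalf n * (EG (shiftLaw μ) x) ^ n := by
  conv_lhs => rw [EG]
  have h1 : ∀ k : ℕ, μ k * x ^ k
      = ∑' n, geomHalf n * (convAdd (poissonPMF α) (iterConv (shiftLaw μ) n) k * x ^ k) := by
    intro k
    rw [hμ.2 k, ← ENNReal.tsum_mul_right]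
    congr 1; ext n; ring
  simp_rw [h1]
  rw [ENNReal.tsum_comm]
  have h2 : ∀ n : ℕ, ∑' k, geomHalf n * (convAdd (poissonPMF α) (iterConv (shiftLaw μ) n) k * x ^ k)
      = geomHalf n * (EG (poissonPMF α) x * (EG (shiftLaw μ) x) ^ n) := by
    intro n
    rw [ENNReal.tsum_mul_left, ← EG, EG_conv, EG_iter]
  simp_rw [h2]
  rw [← ENNReal.tsum_mul_left]
  congr 1; ext n; ring

theorem EG_le_one (μ : ℕ → ℝ≥0∞) (hsum : ∑' k, μ k = 1) (x : ℝ≥0∞) (hx : x ≤ 1) :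
    EG μ x ≤ 1 := by
  rw [← hsum]
  refine ENNReal.tsum_le_tsum fun k => ?_
  calc μ k * x ^ k ≤ μ k * 1 ^ k := by
        exact mul_le_mul_right (pow_le_pow_left' hx k) _
    _ = μ k := by simp

theorem le_EG_zero (μ : ℕ → ℝ≥0∞) (x : ℝ≥0∞) : μ 0 ≤ EG μ x := by
  have := ENNReal.le_tsum (f := fun k => μ k * x ^ k) 0
  simpa [EG] using this

theorem key_ineq (α : ℝ) (hα0 : 0 < α) (μ : ℕ → ℝ≥0∞) (hμ : SatisfiesRDE α μ)
    (s : ℝ) (hs0 : 0 < s) (hs1 : s < 1) :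
    (EG μ (ENNReal.ofReal s)).toReal *
      ((EG μ (ENNReal.ofReal s)).toReal - (μ 0).toReal) ≤ α * s := by
  set x : ℝ≥0∞ := ENNReal.ofReal s with hxdef
  have hx1 : x ≤ 1 := ENNReal.ofReal_le_one.2 hs1.le
  set G : ℝ≥0∞ := EG μ x with hGdef
  set H : ℝ≥0∞ := EG (shiftLaw μ) x with hHdef
  have hH1 : H ≤ 1 := EG_le_one _ (by rw [tsum_shiftLaw]; exact hμ.1) x hx1
  have hG1 : G ≤ 1 := EG_le_one _ hμ.1 x hx1
  have hGtop : G ≠ ⊤ := (hG1.trans_lt ENNReal.one_lt_top).ne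
  have hHtop : H ≠ ⊤ := (hH1.trans_lt ENNReal.one_lt_top).ne
  have hμ0 : μ 0 ≤ G := le_EG_zero μ x
  have hμ0top : μ 0 ≠ ⊤ := (hμ0.trans_lt (hG1.trans_lt ENNReal.one_lt_top)).ne
  set D : ℝ≥0∞ := 1 - H * 2⁻¹ with hDdef
  have hHalf : H * 2⁻¹ ≤ 2⁻¹ := by
    calc H * 2⁻¹ ≤ 1 * 2⁻¹ := mul_le_mul_left hH1 _
      _ = 2⁻¹ := one_mul _
  have hD2 : (2 : ℝ≥0∞)⁻¹ ≤ D := by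
    have : (1 : ℝ≥0∞) - 2⁻¹ ≤ 1 - H * 2⁻¹ := tsub_le_tsub_left hHalf 1
    calc (2 : ℝ≥0∞)⁻¹ = 1 - 2⁻¹ := ENNReal.one_sub_inv_two.symm
      _ ≤ D := this
  have hD0 : D ≠ 0 := by
    intro h
    rw [h] at hD2
    simp at hD2
  have hDtop : D ≠ ⊤ := by
    have : D ≤ 1 := tsub_le_self.trans le_rfl
    exact (this.trans_lt ENNReal.one_lt_top).ne
  set E : ℝ := Real.exp (α * s - α) with hEdef
  have hP : EG (poissonPMF α) x = ENNReal.ofReal E := EG_poisson α hα0.le s hs0.le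
  have hEq : G = ENNReal.ofReal E * (2⁻¹ * D⁻¹) := by
    rw [hGdef, EG_rde α μ hμ x, hP, tsum_geomHalf_mul]
  have h2GD : 2 * (G * D) = ENNReal.ofReal E := by
    rw [hEq]
    have i1 : D⁻¹ * D = 1 := ENNReal.inv_mul_cancel hD0 hDtop
    have i2 : (2 : ℝ≥0∞) * 2⁻¹ = 1 := ENNReal.mul_inv_cancel (by norm_num) (by norm_num)
    calc 2 * (ENNReal.ofReal E * (2⁻¹ * D⁻¹) * D)
        = (2 * 2⁻¹) * ((D⁻¹ * D) * ENNReal.ofReal E) := by ring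
      _ = ENNReal.ofReal E := by rw [i1, i2]; ring
  -- convert to real numbers
  set g : ℝ := G.toReal with hgdef
  set h : ℝ := H.toReal with hhdef
  set p0 : ℝ := (μ 0).toReal with hp0def
  have hg1 : g ≤ 1 := by
    rw [hgdef, ← ENNReal.toReal_one]
    exact ENNReal.toReal_mono (by norm_num) hG1
  have hh1 : h ≤ 1 := by
    rw [hhdef, ← ENNReal.toReal_one]
    exact ENNReal.toReal_mono (by norm_num) hH1
  have hp0g : p0 ≤ g := ENNReal.toReal_mono hGtop hμ0
  have hg0 : 0 ≤ g := ENNReal.toReal_nonneg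
  have hh0 : 0 ≤ h := ENNReal.toReal_nonneg
  have hp00 : 0 ≤ p0 := ENNReal.toReal_nonneg
  have hDreal : D.toReal = 1 - h * 2⁻¹ := by
    rw [hDdef, ENNReal.toReal_sub_of_le (hHalf.trans (by norm_num)) (by norm_num)]
    rw [ENNReal.toReal_mul, ENNReal.toReal_one]
    norm_num; rfl
  have hreal1 : 2 * (g * (1 - h * 2⁻¹)) = E := by
    have := congrArg ENNReal.toReal h2GD
    rw [ENNReal.toReal_mul, ENNReal.toReal_mul, hDreal,
      ENNReal.toReal_ofReal (Real.exp_nonneg _), ENNReal.toReal_ofNat] at this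
    exact this
  -- shift identity in reals
  have hshiftE : x * H + μ 0 = G + μ 0 * x := EG_shift_id μ x
  have hxHtop : x * H ≠ ⊤ := by
    have : x * H ≤ 1 := by
      calc x * H ≤ 1 * 1 := mul_le_mul' hx1 hH1
        _ = 1 := one_mul _
    exact (this.trans_lt ENNReal.one_lt_top).ne
  have hμ0xtop : μ 0 * x ≠ ⊤ := ENNReal.mul_ne_top hμ0top (hx1.trans_lt ENNReal.one_lt_top).ne
  have hreal2 : s * h + p0 = g + p0 * s := by
    have := congrArg ENNReal.toReal hshiftE
    rw [ENNReal.toReal_add hxHtop hμ0top, ENNReal.toReal_add hGtop hμ0xtop,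
      ENNReal.toReal_mul, ENNReal.toReal_mul, hxdef, ENNReal.toReal_ofReal hs0.le] at this
    exact this
  have hE : 1 + (α * s - α) ≤ E := by
    have := Real.add_one_le_exp (α * s - α)
    linarith
  -- algebra
  nlinarith [sq_nonneg (1 - g), mul_pos hs0 (sub_pos.2 hs1), sq_nonneg g,
    mul_nonneg hg0 (sub_nonneg.2 hp0g), mul_nonneg (mul_nonneg hg0 (sub_nonneg.2 hp0g)) hs0.le]

theorem near_one (μ : ℕ → ℝ≥0∞) (hsum : ∑' k, μ k = 1) (ε : ℝ) (hε0 : 0 < ε) (hε1 : ε < 1) :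
    ∃ s : ℝ, 0 < s ∧ s < 1 ∧ 1 - ε ≤ (EG μ (ENNReal.ofReal s)).toReal := by
  have hμtop : ∀ k, μ k ≠ ⊤ := fun k =>
    ((ENNReal.le_tsum k).trans_lt (hsum ▸ ENNReal.one_lt_top)).ne
  have hsummable : Summable (fun k => (μ k).toReal) :=
    ENNReal.summable_toReal (hsum ▸ ENNReal.one_ne_top)
  have htsum : ∑' k, (μ k).toReal = 1 := by
    rw [← ENNReal.tsum_toReal_eq hμtop, hsum, ENNReal.toReal_one]
  have htends := hsummable.hasSum.tendsto_sum_nat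
  rw [htsum] at htends
  have hev : ∀ᶠ N in Filter.atTop, 1 - ε / 2 < ∑ k ∈ Finset.range N, (μ k).toReal := by
    apply htends.eventually_const_lt
    linarith
  obtain ⟨N, hN⟩ := hev.exists
  have hNpos : 0 < N := by
    rcases Nat.eq_zero_or_pos N with h | h
    · exfalso; rw [h] at hN; simp at hN; linarith
    · exact h
  set s : ℝ := 1 - ε / (2 * N) with hsdef
  have hεN : ε / (2 * N) ≤ ε / 2 := by
    apply div_le_div_of_nonneg_left hε0.le (by norm_num)
    have : (1 : ℝ) ≤ N := by exact_mod_cast hNpos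
    linarith
  have hs0 : 0 < s := by
    have : ε / 2 < 1 := by linarith
    simp only [hsdef]; linarith [hεN]
  have hs1 : s < 1 := by
    have : 0 < ε / (2 * N) := by positivity
    simp only [hsdef]; linarith
  refine ⟨s, hs0, hs1, ?_⟩
  -- Bernoulli: s ^ N ≥ 1 - ε / 2
  have hbern : 1 - ε / 2 ≤ s ^ N := by
    have h1 : (-2 : ℝ) ≤ -(ε / (2 * N)) := by
      have : ε / (2 * N) ≤ ε / 2 := hεN
      linarith
    have h2 := one_add_mul_le_pow h1 N
    have h3 : (1 : ℝ) + N * (-(ε / (2 * N))) = 1 - ε / 2 := by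
      field_simp
      ring
    rw [h3] at h2
    have h4 : (1 : ℝ) + (-(ε / (2 * N))) = s := by simp [hsdef]; ring
    rwa [h4] at h2
  -- EG bound
  set x : ℝ≥0∞ := ENNReal.ofReal s with hxdef
  have hx1 : x ≤ 1 := ENNReal.ofReal_le_one.2 hs1.le
  have hlow : x ^ N * ∑ k ∈ Finset.range N, μ k ≤ EG μ x := by
    calc x ^ N * ∑ k ∈ Finset.range N, μ k = ∑ k ∈ Finset.range N, μ k * x ^ N := by
          rw [Finset.mul_sum]; congr 1; ext k; ring
      _ ≤ ∑ k ∈ Finset.range N, μ k * x ^ k := by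
          refine Finset.sum_le_sum fun k hk => ?_
          exact mul_le_mul_right (pow_le_pow_right_of_le_one' hx1 (Finset.mem_range.1 hk).le) _
      _ ≤ EG μ x := ENNReal.sum_le_tsum _
  have hEGtop : EG μ x ≠ ⊤ :=
    ((EG_le_one μ hsum x hx1).trans_lt ENNReal.one_lt_top).ne
  have hlowR : s ^ N * ∑ k ∈ Finset.range N, (μ k).toReal ≤ (EG μ x).toReal := by
    have := ENNReal.toReal_mono hEGtop hlow
    rwa [ENNReal.toReal_mul, ENNReal.toReal_pow, hxdef, ENNReal.toReal_ofReal hs0.le,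
      ENNReal.toReal_sum (fun k _ => hμtop k)] at this
  have hsN0 : 0 ≤ s ^ N := by positivity
  calc 1 - ε ≤ (1 - ε / 2) * (1 - ε / 2) := by nlinarith
    _ ≤ s ^ N * ∑ k ∈ Finset.range N, (μ k).toReal := by
        apply mul_le_mul hbern hN.le (by linarith) hsN0
    _ ≤ (EG μ x).toReal := hlowR

/-- For α ∈ (0,1), p = P(X = 0) ≥ 1 − α. -/
theorem prob_zero_ge_one_sub_alpha
    (α : ℝ) (hα0 : 0 < α) (hα1 : α < 1)
    (μ : ℕ → ℝ≥0∞) (hμ : SatisfiesRDE α μ) :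
    1 - α ≤ (μ 0).toReal := by
  set p0 : ℝ := (μ 0).toReal with hp0
  have key : ∀ ε : ℝ, 0 < ε → ε < 1 → (1 - ε) ^ 2 ≤ α + p0 := by
    intro ε hε0 hε1
    obtain ⟨s, hs0, hs1, hg⟩ := near_one μ hμ.1 ε hε0 hε1
    set g : ℝ := (EG μ (ENNReal.ofReal s)).toReal with hgdef
    have h1 := key_ineq α hα0 μ hμ s hs0 hs1
    have hg1 : g ≤ 1 := by
      rw [hgdef, ← ENNReal.toReal_one]
      exact ENNReal.toReal_mono (by norm_num) (EG_le_one μ hμ.1 _ (ENNReal.ofReal_le_one.2 hs1.le))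
    have hp00 : 0 ≤ p0 := ENNReal.toReal_nonneg
    nlinarith
  have h1 : (1 : ℝ) ≤ α + p0 := by
    refine le_of_forall_pos_le_add fun δ hδ => ?_
    set ε : ℝ := min (δ / 2) (1 / 2) with hε
    have hε0 : 0 < ε := by positivity
    have hε1 : ε < 1 := lt_of_le_of_lt (min_le_right _ _) (by norm_num)
    have := key ε hε0 hε1
    have h2 : ε ≤ δ / 2 := min_le_left _ _
    nlinarith
  linarith
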